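/- Let f(x) = x^n + 2x^m + 1 where m and n are positive integers with m < n. Then f(x) is a product of cyclotomic polynomials (over the integers) if and only if n = 2m. -/

import Mathlib

open Polynomial Finset

namespace OddLength

/-- A signed permutation of degree `n`, encoded as an underlying permutation of
`Fin n` together with a sign vector. -/
abbrev SP (n : ℕ) := Equiv.Perm (Fin n) × (Fin n → Bool)

/-- The one-line value `σ(i)` of a signed permutation, for `i ∈ [1,n]` (and `0` elsewhere). -/
def sval {n : ℕ} (σ : SP n) (i : ℕ) : ℤ :=
  if h : 1 ≤ i ∧ i ≤ n then
    (if σ.2 ⟨i - 1, by omega⟩ then (-1 : ℤ) else 1) *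
      (((σ.1 ⟨i - 1, by omega⟩ : Fin n) : ℕ) + 1 : ℤ)
  else 0

/-- A signed permutation is *even* (lies in the Weyl group `D_n`) if it has an even
number of negative entries in its one-line notation. -/
def IsEvenSP {n : ℕ} (σ : SP n) : Prop :=
  Even ((Finset.univ.filter (fun i => σ.2 i = true)).card)

instance {n : ℕ} (σ : SP n) : Decidable (IsEvenSP σ) := by
  unfold IsEvenSP; infer_instance

/-- Pairs `1 ≤ i < j ≤ n` of positions. -/
def pairs (n : ℕ) : Finset (ℕ × ℕ) :=
  (Finset.Icc 1 n ×ˢ Finset.Icc 1 n).filter (fun p => p.1 < p.2)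

/-- Number of inversions. -/
def invSP {n : ℕ} (σ : SP n) : ℕ :=
  ((pairs n).filter (fun p => sval σ p.2 < sval σ p.1)).card

/-- Number of negative sum pairs. -/
def nspSP {n : ℕ} (σ : SP n) : ℕ :=
  ((pairs n).filter (fun p => sval σ p.1 + sval σ p.2 < 0)).card

/-- Number of odd inversions (positions of different parity). -/
def oinvSP {n : ℕ} (σ : SP n) : ℕ :=
  ((pairs n).filter (fun p => sval σ p.2 < sval σ p.1 ∧ p.1 % 2 ≠ p.2 % 2)).card

/-- Number of odd negative sum pairs (positions of different parity). -/
def onspSP {n : ℕ} (σ : SP n) : ℕ :=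
  ((pairs n).filter (fun p => sval σ p.1 + sval σ p.2 < 0 ∧ p.1 % 2 ≠ p.2 % 2)).card

/-- The type-`D` Coxeter length `ℓ(σ) = inv(σ) + nsp(σ)`. -/
def ellD {n : ℕ} (σ : SP n) : ℕ := invSP σ + nspSP σ

/-- The type-`D` odd length `L(σ) = oinv(σ) + onsp(σ)`. -/
def LD {n : ℕ} (σ : SP n) : ℕ := oinvSP σ + onspSP σ

/-- The descent value at position `i`, with the type-`D` convention `σ(0) := -σ(2)`. -/
def dval {n : ℕ} (σ : SP n) (i : ℕ) : ℤ := if i = 0 then -sval σ 2 else sval σ i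

/-- Membership in the parabolic quotient `D_n^I`: `σ(i) < σ(i+1)` for all `i ∈ I`,
with the convention `σ(0) = -σ(2)`. -/
def InQuot {n : ℕ} (σ : SP n) (I : Finset ℕ) : Prop :=
  ∀ i ∈ I, dval σ i < dval σ (i + 1)

instance {n : ℕ} (σ : SP n) (I : Finset ℕ) : Decidable (InQuot σ I) := by
  unfold InQuot; infer_instance

/-- `σ` is ascending: `σ(1) < σ(2) < ⋯ < σ(n)`. -/
def Ascending {n : ℕ} (σ : SP n) : Prop :=
  ∀ i, 1 ≤ i → i < n → sval σ i < sval σ (i + 1)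

/-- `σ` is a chessboard element: `σ(i) ≢ σ(i+1) (mod 2)` for all `i ∈ [n-1]`. -/
def Chessboard {n : ℕ} (σ : SP n) : Prop :=
  ∀ i ∈ Finset.Icc 1 (n - 1), sval σ i % 2 ≠ sval σ (i + 1) % 2

instance {n : ℕ} (σ : SP n) : Decidable (Chessboard σ) := by
  unfold Chessboard; infer_instance

/-- The sign-twisted generating function of the odd length over `D_n^I`. -/
noncomputable def genD (n : ℕ) (I : Finset ℕ) : Polynomial ℤ :=
  ∑ σ ∈ Finset.univ.filter (fun σ : SP n => IsEvenSP σ ∧ InQuot σ I),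
    (-1 : Polynomial ℤ) ^ ellD σ * X ^ LD σ


/-- `f` is a product of cyclotomic polynomials `Φ_k` for positive integers `k`. -/
def IsCyclotomicProduct (f : Polynomial ℤ) : Prop :=
  ∃ s : Multiset ℕ, (∀ k ∈ s, 0 < k) ∧
    f = (s.map (fun k => Polynomial.cyclotomic k ℤ)).prod

/-- Lemma 6.1: `x^n + 2x^m + 1` is a product of cyclotomic polynomials iff `n = 2m`. -/
private theorem stmt0_aux (m n : ℕ) (hm : 0 < m) (hmn : m < n) :
    (∃ s : Multiset ℕ, (∀ k ∈ s, 0 < k) ∧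
      (X ^ n + 2 * X ^ m + 1 : Polynomial ℤ) =
        (s.map (fun k => Polynomial.cyclotomic k ℤ)).prod) ↔ n = 2 * m := by
  constructor
  · rintro ⟨s, hs, hf⟩
    set F : Polynomial ℂ := X ^ n + 2 * X ^ m + 1 with hF
    have hmapF : (X ^ n + 2 * X ^ m + 1 : Polynomial ℤ).map (Int.castRingHom ℂ) = F := by
      simp [hF]
    have hFprod : F = (s.map (fun k => Polynomial.cyclotomic k ℂ)).prod := by
      rw [← hmapF, hf, Polynomial.map_multiset_prod, Multiset.map_map]
      congr 1
      apply Multiset.map_congr rfl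
      intro k hk
      simp [Polynomial.map_cyclotomic]
    -- every root has norm 1 and z^m = -1
    have hroot : ∀ z : ℂ, F.eval z = 0 → ‖z‖ = 1 ∧ z ^ m = -1 := by
      intro z hz
      have hnorm : ‖z‖ = 1 := by
        have hz' := hz
        rw [hFprod, Polynomial.eval_multiset_prod, Multiset.map_map,
          Multiset.prod_eq_zero_iff] at hz'
        obtain ⟨k, hks, hk0⟩ := Multiset.mem_map.mp hz'
        obtain ⟨q, hq⟩ := Polynomial.cyclotomic.dvd_X_pow_sub_one k ℂ
        have hzk : z ^ k - 1 = 0 := by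
          have := congrArg (Polynomial.eval z) hq
          simp only [Polynomial.eval_sub, Polynomial.eval_pow, Polynomial.eval_X,
            Polynomial.eval_one, Polynomial.eval_mul] at this
          simp only [Function.comp] at hk0
          rw [this, hk0, zero_mul]
        exact Complex.norm_eq_one_of_pow_eq_one (by linear_combination hzk) (hs k hks).ne'
      have hev : z ^ n + 2 * z ^ m + 1 = 0 := by
        simpa [hF] using hz
      set w : ℂ := z ^ n with hw
      have hwn : ‖w‖ = 1 := by rw [hw, norm_pow, hnorm, one_pow]
      have hw1 : ‖w + 1‖ = 2 := by
        have : w + 1 = -(2 * z ^ m) := by rw [hw]; linear_combination hev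
        rw [this, norm_neg, norm_mul, norm_pow, hnorm, one_pow]
        simp
      have hwre : Complex.normSq w = 1 := by
        rw [Complex.normSq_eq_norm_sq, hwn]; norm_num
      have hwre2 : Complex.normSq (w + 1) = 4 := by
        rw [Complex.normSq_eq_norm_sq, hw1]; norm_num
      rw [Complex.normSq_apply] at hwre
      rw [Complex.normSq_apply, Complex.add_re, Complex.add_im, Complex.one_re,
        Complex.one_im] at hwre2
      have hre : w.re = 1 := by nlinarith
      have him : w.im = 0 := by nlinarith
      have hwone : w = 1 := by
        apply Complex.ext <;> simp [hre, him]
      have hzm : z ^ m = -1 := by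
        have h2 : (2 : ℂ) * z ^ m = -2 := by
          rw [hw] at hwone
          linear_combination hev - hwone
        linear_combination h2 / 2
      exact ⟨hnorm, hzm⟩
    have hF0 : F ≠ 0 := by
      intro h
      have : F.eval 0 = 0 := by rw [h]; simp
      rw [hF] at this
      simp [zero_pow hm.ne', zero_pow (show n ≠ 0 by omega)] at this
    have hdeg : F.natDegree = n := by
      rw [hF]; compute_degree!
      all_goals first
        | omega
        | simp [show n ≠ m by omega, show n ≠ 0 by omega]
    have hcard : Multiset.card F.roots = n := by
      rw [← hdeg]
      exact (Polynomial.splits_iff_card_roots.mp (IsAlgClosed.splits F))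
    set G : Polynomial ℂ := X ^ m + 1 with hG
    have hG0 : G ≠ 0 := by
      intro h
      have : G.eval 0 = 0 := by rw [h]; simp
      rw [hG] at this
      simp [zero_pow hm.ne'] at this
    have hGdeg : G.natDegree = m := by
      rw [hG]; compute_degree!
      simp [hm.ne']
    have hsub : F.roots.toFinset ⊆ G.roots.toFinset := by
      intro z hz
      rw [Multiset.mem_toFinset, Polynomial.mem_roots hF0] at hz
      rw [Multiset.mem_toFinset, Polynomial.mem_roots hG0]
      have h := (hroot z hz).2
      show G.eval z = 0
      rw [hG]; simp [h]
    by_cases hnd : F.roots.Nodup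
    · exfalso
      have h1 : F.roots.toFinset.card = n := by
        rw [Multiset.toFinset_card_of_nodup hnd, hcard]
      have h2 : G.roots.toFinset.card ≤ m := by
        calc G.roots.toFinset.card ≤ Multiset.card G.roots := Multiset.toFinset_card_le _
          _ ≤ G.natDegree := Polynomial.card_roots' G
          _ = m := hGdeg
      have := Finset.card_le_card hsub
      omega
    · rw [Multiset.nodup_iff_count_le_one] at hnd
      push_neg at hnd
      obtain ⟨z, hz2⟩ := hnd
      have hzroot : z ∈ F.roots := Multiset.count_pos.mp (by omega)
      have hzroot' : F.eval z = 0 := (Polynomial.mem_roots hF0).mp hzroot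
      obtain ⟨hnorm, hzm⟩ := hroot z hzroot'
      have hz0 : z ≠ 0 := by
        intro h
        rw [h, zero_pow hm.ne'] at hzm
        exact absurd hzm (by norm_num)
      have hrm : 2 ≤ Polynomial.rootMultiplicity z F := by
        rw [← Polynomial.count_roots]; omega
      have hdvd : (X - C z) ^ 2 ∣ F :=
        dvd_trans (pow_dvd_pow _ hrm) (Polynomial.pow_rootMultiplicity_dvd F z)
      obtain ⟨g, hg⟩ := hdvd
      have hder : (Polynomial.derivative F).eval z = 0 := by
        rw [hg, Polynomial.derivative_mul]
        simp [Polynomial.derivative_pow]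
      have hderF : Polynomial.derivative F =
          C (n : ℂ) * X ^ (n - 1) + C ((2 * m : ℕ) : ℂ) * X ^ (m - 1) := by
        rw [hF]
        simp [Polynomial.derivative_X_pow, map_ofNat]
        push_cast
        ring
      rw [hderF] at hder
      simp only [Polynomial.eval_add, Polynomial.eval_mul, Polynomial.eval_C,
        Polynomial.eval_pow, Polynomial.eval_X] at hder
      have hsplitpow : z ^ (n - 1) = z ^ (n - m) * z ^ (m - 1) := by
        rw [← pow_add]; congr 1; omega
      rw [hsplitpow] at hder
      have hfact : ((n : ℂ) * z ^ (n - m) + ((2 * m : ℕ) : ℂ)) * z ^ (m - 1) = 0 := by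
        linear_combination hder
      have hkey : (n : ℂ) * z ^ (n - m) = -((2 * m : ℕ) : ℂ) := by
        rcases mul_eq_zero.mp hfact with h | h
        · linear_combination h
        · exact absurd h (pow_ne_zero _ hz0)
      have hnormeq := congrArg norm hkey
      rw [norm_mul, norm_pow, hnorm, one_pow, norm_neg, Complex.norm_natCast,
        Complex.norm_natCast, mul_one] at hnormeq
      exact_mod_cast hnormeq
  · rintro rfl
    set t : Finset ℕ := (2 * m).divisors \ m.divisors with ht
    have hsub : m.divisors ⊆ (2 * m).divisors := by
      intro d hd
      rw [Nat.mem_divisors] at *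
      exact ⟨hd.1.mul_left 2, by omega⟩
    have hXm : (X ^ m - 1 : Polynomial ℤ) ≠ 0 := by
      intro h
      have : (X ^ m - 1 : Polynomial ℤ).eval 0 = 0 := by rw [h]; simp
      simp [zero_pow hm.ne'] at this
    have hprodt : ∏ d ∈ t, cyclotomic d ℤ = X ^ m + 1 := by
      apply mul_right_cancel₀ hXm
      have hps := Finset.prod_sdiff (f := fun d => cyclotomic d ℤ) hsub
      rw [Polynomial.prod_cyclotomic_eq_X_pow_sub_one hm ℤ,
        Polynomial.prod_cyclotomic_eq_X_pow_sub_one (by omega : 0 < 2 * m) ℤ] at hps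
      rw [ht, hps]
      ring
    refine ⟨t.val + t.val, ?_, ?_⟩
    · intro k hk
      rw [Multiset.mem_add] at hk
      have hkt : k ∈ t := by rcases hk with h | h <;> exact h
      have := Finset.mem_sdiff.mp hkt
      exact Nat.pos_of_mem_divisors this.1
    · rw [Multiset.map_add, Multiset.prod_add, ← Finset.prod_eq_multiset_prod, hprodt]
      ring

/-- Lemma 6.1: `x^n + 2x^m + 1` is a product of cyclotomic polynomials iff `n = 2m`. -/
theorem stmt0 (m n : ℕ) (hm : 0 < m) (hmn : m < n) :
    IsCyclotomicProduct (X ^ n + 2 * X ^ m + 1) ↔ n = 2 * m :=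
  stmt0_aux m n hm hmn

end OddLength
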